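/- Let R be a commutative ring, A an R-algebra, and f₁, …, f_m elements of A generating the unit ideal of A. Then A is of finite expansion over R if and only if for every i the localization A_{f_i} of A at f_i is of finite expansion over R. -/

import Mathlib

set_option maxHeartbeats 2000000
set_option synthInstance.maxHeartbeats 400000

/-- An `R`-algebra `A` is of *finite expansion* if it is integral over a finitely
generated subalgebra, i.e. there is a finite set of quasi-generators. -/
def Algebra.FiniteExpansion (R A : Type*) [CommRing R] [CommRing A] [Algebra R A] : Prop :=
  ∃ s : Finset A, Algebra.IsIntegral (Algebra.adjoin R (s : Set A)) A

/-- If `x` is integral over a subalgebra contained in the range of a ring hom `g`,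
then `x` is integral relative to `g`. -/
private lemma aux_range {R S T : Type*} [CommRing R] [CommRing S] [CommRing T] [Algebra R T]
    (g : S →+* T) (B : Subalgebra R T) (hB : (B : Set T) ⊆ Set.range g) {x : T}
    (hx : IsIntegral B x) : g.IsIntegralElem x := by
  rcases subsingleton_or_nontrivial T with hT | hT
  · exact ⟨Polynomial.X, Polynomial.monic_X, Subsingleton.elim _ _⟩
  obtain ⟨p, hmon, hev⟩ := hx
  have hl : p.map (algebraMap B T) ∈ Polynomial.lifts g := by
    rw [Polynomial.lifts_iff_coeff_lifts]
    intro n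
    rw [Polynomial.coeff_map]
    exact hB (p.coeff n).2
  obtain ⟨q, hq, -, hqm⟩ := Polynomial.lifts_and_degree_eq_and_monic hl (hmon.map _)
  refine ⟨q, hqm, ?_⟩
  rw [Polynomial.eval₂_eq_eval_map, hq, ← Polynomial.eval₂_eq_eval_map]
  exact hev

/-- Pushing integrality forward along a ring hom mapping one subalgebra into another. -/
private lemma aux_map {R A T : Type*} [CommRing R] [CommRing A] [CommRing T] [Algebra R A]
    [Algebra R T] (ψ : A →+* T) (B : Subalgebra R A) (D : Subalgebra R T)
    (hBD : ∀ b : B, ψ b ∈ D) {x : A} (hx : IsIntegral B x) : IsIntegral D (ψ x) := by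
  obtain ⟨p, hmon, hev⟩ := hx
  let ρ : ↥B →+* ↥D := (ψ.comp (algebraMap ↥B A)).codRestrict D.toSubring fun b => hBD b
  refine ⟨p.map ρ, hmon.map ρ, ?_⟩
  rw [Polynomial.eval₂_map]
  have h1 : (algebraMap (↥D) T).comp ρ = ψ.comp (algebraMap (↥B) A) := by ext; rfl
  rw [h1, ← Polynomial.hom_eval₂, hev, map_zero]

/-- Finite expansion can be checked on a finite cover of `Spec A` by principal opens:
if `f 0, …, f (m-1)` generate the unit ideal of `A`, then `A` is of finite expansion over
`R` if and only if each localization `A_{f i}` is of finite expansion over `R`. -/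
theorem Algebra.FiniteExpansion.iff_localization (R A : Type*) [CommRing R] [CommRing A]
    [Algebra R A] (m : ℕ) (f : Fin m → A) (hf : Ideal.span (Set.range f) = ⊤) :
    Algebra.FiniteExpansion R A ↔
      ∀ i, Algebra.FiniteExpansion R (Localization.Away (f i)) := by
  classical
  constructor
  · rintro ⟨s, hs⟩ i
    set L := Localization.Away (f i)
    set φ := algebraMap A L
    refine ⟨s.image φ ∪ {IsLocalization.Away.invSelf (f i)}, ⟨fun x => ?_⟩⟩
    set D := Algebra.adjoin R ((s.image φ ∪ {IsLocalization.Away.invSelf (f i)} : Finset L) : Set L)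
    obtain ⟨⟨a, _, k, rfl⟩, e⟩ := IsLocalization.surj (Submonoid.powers (f i)) x
    have hinv : (IsLocalization.Away.invSelf (f i) : L) ∈ D :=
      Algebra.subset_adjoin (by simp)
    have h1 : IsIntegral D (φ a) := by
      refine aux_map φ (Algebra.adjoin R (s : Set A)) D (fun b => ?_) (hs.isIntegral a)
      have hb : φ (b : A) ∈ (Algebra.adjoin R (s : Set A)).map (IsScalarTower.toAlgHom R A L) :=
        ⟨b, b.2, rfl⟩
      rw [AlgHom.map_adjoin] at hb
      refine Algebra.adjoin_mono ?_ hb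
      intro y hy
      obtain ⟨z, hz, rfl⟩ := hy
      simp only [Finset.coe_union, Finset.coe_image, Set.mem_union]
      exact Or.inl ⟨z, hz, rfl⟩
    have hu : φ (f i) * IsLocalization.Away.invSelf (f i) = 1 :=
      IsLocalization.Away.mul_invSelf (f i)
    have hx : x = φ a * (IsLocalization.Away.invSelf (f i)) ^ k := by
      have : x * (φ (f i) * IsLocalization.Away.invSelf (f i)) ^ k = x := by rw [hu, one_pow, mul_one]
      rw [← this, mul_pow, ← mul_assoc]
      congr 1
      rw [← map_pow]
      exact e
    rw [hx]
    exact h1.mul (IsIntegral.pow (isIntegral_algebraMap (x := (⟨_, hinv⟩ : D))) k)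
  · intro h
    choose sloc hsloc using h
    have hsurj : ∀ i (y : Localization.Away (f i)),
        ∃ (a : A) (k : ℕ), y * algebraMap A _ (f i ^ k) = algebraMap A _ a := by
      intro i y
      obtain ⟨⟨a, _, k, rfl⟩, e⟩ := IsLocalization.surj (Submonoid.powers (f i)) y
      exact ⟨a, k, e⟩
    choose num pw hnum using hsurj
    obtain ⟨c, hc⟩ := Ideal.mem_span_range_iff_exists_fun.mp
      (hf ▸ Submodule.mem_top : (1 : A) ∈ Ideal.span (Set.range f))
    set s : Finset A :=
      (Finset.univ.biUnion fun i => (sloc i).image (num i)) ∪ Finset.image f Finset.univ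
        ∪ Finset.image c Finset.univ with hsdef
    set C := Algebra.adjoin R (s : Set A) with hCdef
    have hfC : ∀ i, f i ∈ C := fun i => Algebra.subset_adjoin (by simp [hsdef])
    have hcC : ∀ i, c i ∈ C := fun i => Algebra.subset_adjoin (by simp [hsdef])
    have hnumC : ∀ i, ∀ y ∈ sloc i, num i y ∈ C := fun i y hy =>
      Algebra.subset_adjoin (by
        simp only [hsdef, Finset.coe_union, Set.mem_union, Finset.coe_biUnion, Finset.coe_univ,
          Set.mem_univ, Set.iUnion_true, Set.mem_iUnion, Finset.coe_image, Set.mem_image]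
        exact Or.inl (Or.inl ⟨i, y, hy, rfl⟩))
    set f' : Fin m → C := fun i => ⟨f i, hfC i⟩ with hf'def
    have hspan' : Ideal.span (Set.range f') = ⊤ := by
      rw [Ideal.eq_top_iff_one]
      refine Ideal.mem_span_range_iff_exists_fun.mpr ⟨fun i => ⟨c i, hcC i⟩, ?_⟩
      apply Subtype.ext
      push_cast
      simpa using hc
    have hint : RingHom.IsIntegral (algebraMap C A) := by
      apply RingHom.isIntegral_ofLocalizationSpan (algebraMap C A) (Set.range f') hspan'
      rintro ⟨r, i, rfl⟩
      show RingHom.IsIntegral (Localization.awayMap (algebraMap ↥C A) (f' i))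
      unfold Localization.awayMap IsLocalization.Away.map
      intro x
      refine aux_range _ (Algebra.adjoin R ((sloc i : Finset (Localization.Away (f i))) : Set (Localization.Away (f i)))) ?_ ((hsloc i).isIntegral x)
      intro y hy
      induction hy using Algebra.adjoin_induction with
      | mem y hy =>
          refine ⟨IsLocalization.mk' (Localization.Away (f' i)) (⟨num i y, hnumC i y hy⟩ : C)
            (⟨f' i ^ pw i y, pw i y, rfl⟩ : Submonoid.powers (f' i)), ?_⟩
          haveI : IsLocalization (Submonoid.powers ((algebraMap (↥C) A) (f' i)))
              (Localization.Away (f i)) := Localization.isLocalization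
          erw [IsLocalization.map_mk']
          have h : y = IsLocalization.mk' (Localization.Away (f i)) (num i y)
              (⟨f i ^ pw i y, pw i y, rfl⟩ : Submonoid.powers (f i)) :=
            IsLocalization.eq_mk'_iff_mul_eq.mpr (hnum i y)
          exact h.symm
      | algebraMap r =>
          refine ⟨algebraMap R (Localization.Away (f' i)) r, ?_⟩
          rw [IsScalarTower.algebraMap_apply R ↥C (Localization.Away (f' i)) r,
            ]
          erw [IsLocalization.map_eq]
          rw [← IsScalarTower.algebraMap_apply R ↥C A,
            ← IsScalarTower.algebraMap_apply R A]
          rfl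
      | add y z hy hz ihy ihz =>
          obtain ⟨u, rfl⟩ := ihy; obtain ⟨v, rfl⟩ := ihz
          exact ⟨u + v, map_add _ _ _⟩
      | mul y z hy hz ihy ihz =>
          obtain ⟨u, rfl⟩ := ihy; obtain ⟨v, rfl⟩ := ihz
          exact ⟨u * v, map_mul _ _ _⟩
    exact ⟨s, ⟨hint⟩⟩
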